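/- For all λ > 0, γ ≥ 0 and β > 0, ∫₀^∞ e^{−γh²} · (1/(βh²))(1 − e^{−βh²}) · (8/3)π²λ^{5/2} h⁴ e^{−λπh²} dh = (2λπ/(3β)) [ (1 + γ/(λπ))^{−3/2} − (1 + (γ+β)/(λπ))^{−3/2} ]. Equivalently, if H has Nakagami(5/2, 5/(2λπ)) density (8/3)π²λ^{5/2}h⁴e^{−λπh²} and, conditionally on H = h, R² is uniformly distributed on [0, h²], then E[e^{−γH² − βR²}] equals the right-hand side. -/

import Mathlib

open MeasureTheory Set Real

lemma aux_integrable {a : ℝ} (ha : 0 < a) :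
    IntegrableOn (fun h : ℝ => h ^ 2 * Real.exp (-(a * h ^ 2))) (Ioi 0) := by
  have := (integrable_rpow_mul_exp_neg_mul_sq ha (by norm_num : (-1:ℝ) < 2)).integrableOn
    (s := Ioi 0)
  refine this.congr_fun (fun x hx => ?_) measurableSet_Ioi
  simp [Real.rpow_two, neg_mul]

lemma aux_int {a : ℝ} (ha : 0 < a) :
    ∫ h in Ioi (0:ℝ), h ^ 2 * Real.exp (-(a * h ^ 2)) = √π / 4 * a ^ (-(3:ℝ)/2) := by
  have key := integral_comp_rpow_Ioi_of_pos
    (g := fun t => (1/2) * (t ^ ((3:ℝ)/2 - 1) * Real.exp (-(a * t)))) (p := 2) two_pos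
  have h1 : (∫ x in Ioi (0:ℝ), (2 * x ^ ((2:ℝ) - 1)) •
      ((1/2) * ((x ^ (2:ℝ)) ^ ((3:ℝ)/2 - 1) * Real.exp (-(a * x ^ (2:ℝ)))))) =
      ∫ h in Ioi (0:ℝ), h ^ 2 * Real.exp (-(a * h ^ 2)) := by
    refine setIntegral_congr_fun measurableSet_Ioi (fun x hx => ?_)
    have hx0 : (0:ℝ) < x := hx
    have hx2 : x ^ (2:ℝ) = x ^ 2 := by
      rw [← Real.rpow_natCast x 2]; norm_num
    have : (x ^ (2:ℝ)) ^ ((3:ℝ)/2 - 1) = x := by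
      rw [← Real.rpow_mul hx0.le]
      norm_num
    rw [this, hx2]
    have hx1 : x ^ ((2:ℝ) - 1) = x := by norm_num
    rw [hx1]
    simp only [smul_eq_mul]
    ring
  have h2 : (∫ t in Ioi (0:ℝ), (1/2) * (t ^ ((3:ℝ)/2 - 1) * Real.exp (-(a * t)))) =
      √π / 4 * a ^ (-(3:ℝ)/2) := by
    rw [integral_const_mul, integral_rpow_mul_exp_neg_mul_Ioi (by norm_num) ha]
    have hΓ : Real.Gamma ((3:ℝ)/2) = √π / 2 := by
      have : (3:ℝ)/2 = 1/2 + 1 := by norm_num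
      rw [this, Real.Gamma_add_one (by norm_num), Real.Gamma_one_half_eq]
      ring
    have hinv : (1/a) ^ ((3:ℝ)/2) = a ^ (-(3:ℝ)/2) := by
      rw [one_div, ← Real.rpow_neg_one a, ← Real.rpow_mul ha.le]
      norm_num
    rw [hΓ, hinv]; ring
  rw [← h1, key, h2]

theorem stmt_11 (lam γ β : ℝ) (hlam : 0 < lam) (hγ : 0 ≤ γ) (hβ : 0 < β) :
    (∫ h in Ioi (0:ℝ),
        Real.exp (-(γ * h ^ 2)) * (1 / (β * h ^ 2) * (1 - Real.exp (-(β * h ^ 2)))) *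
          (8/3 * Real.pi ^ 2 * lam ^ ((5:ℝ)/2) * h ^ 4 * Real.exp (-(lam * Real.pi * h ^ 2)))) =
      2 * lam * Real.pi / (3 * β) *
        ((1 + γ / (lam * Real.pi)) ^ (-(3:ℝ)/2) -
          (1 + (γ + β) / (lam * Real.pi)) ^ (-(3:ℝ)/2)) := by
  set L := lam * Real.pi with hL
  have hL0 : 0 < L := mul_pos hlam Real.pi_pos
  set C : ℝ := 8/3 * Real.pi ^ 2 * lam ^ ((5:ℝ)/2) with hC
  set a1 : ℝ := L + γ with ha1
  set a2 : ℝ := L + (γ + β) with ha2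
  have ha10 : 0 < a1 := by positivity
  have ha20 : 0 < a2 := by positivity
  have hcong : (∫ h in Ioi (0:ℝ),
        Real.exp (-(γ * h ^ 2)) * (1 / (β * h ^ 2) * (1 - Real.exp (-(β * h ^ 2)))) *
          (C * h ^ 4 * Real.exp (-(L * h ^ 2)))) =
      ∫ h in Ioi (0:ℝ), C / β *
        (h ^ 2 * Real.exp (-(a1 * h ^ 2)) - h ^ 2 * Real.exp (-(a2 * h ^ 2))) := by
    refine setIntegral_congr_fun measurableSet_Ioi (fun h hh => ?_)
    have hh0 : (0:ℝ) < h := hh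
    have e1 : Real.exp (-(γ * h ^ 2)) * Real.exp (-(L * h ^ 2)) = Real.exp (-(a1 * h ^ 2)) := by
      rw [← Real.exp_add, ha1]; ring_nf
    have e2 : Real.exp (-(γ * h ^ 2)) * Real.exp (-(β * h ^ 2)) * Real.exp (-(L * h ^ 2))
        = Real.exp (-(a2 * h ^ 2)) := by
      rw [← Real.exp_add, ← Real.exp_add, ha2]; ring_nf
    rw [← e1, ← e2]
    field_simp
  rw [hcong, integral_const_mul,
    integral_sub (aux_integrable ha10) (aux_integrable ha20),
    aux_int ha10, aux_int ha20]
  have hr1 : (1 + γ / L) ^ (-(3:ℝ)/2) = a1 ^ (-(3:ℝ)/2) / L ^ (-(3:ℝ)/2) := by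
    rw [show (1 + γ / L) = a1 / L by rw [ha1]; field_simp, Real.div_rpow ha10.le hL0.le]
  have hr2 : (1 + (γ + β) / L) ^ (-(3:ℝ)/2) = a2 ^ (-(3:ℝ)/2) / L ^ (-(3:ℝ)/2) := by
    rw [show (1 + (γ + β) / L) = a2 / L by rw [ha2]; field_simp, Real.div_rpow ha20.le hL0.le]
  rw [hr1, hr2]
  have hfact : C * (√π / 4) = 2/3 * L ^ ((5:ℝ)/2) := by
    rw [hC, hL, Real.mul_rpow hlam.le Real.pi_pos.le]
    have hpi : Real.pi ^ ((5:ℝ)/2) = Real.pi ^ 2 * √Real.pi := by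
      rw [Real.sqrt_eq_rpow, ← Real.rpow_natCast Real.pi 2, ← Real.rpow_add Real.pi_pos]
      norm_num
    rw [hpi]; ring
  have hLinv : (L ^ (-(3:ℝ)/2))⁻¹ = L ^ ((3:ℝ)/2) := by
    rw [show (-(3:ℝ)/2) = -((3:ℝ)/2) by norm_num, Real.rpow_neg hL0.le, inv_inv]
  have hL52 : L * L ^ ((3:ℝ)/2) = L ^ ((5:ℝ)/2) := by
    rw [show L * L ^ ((3:ℝ)/2) = L ^ (1:ℝ) * L ^ ((3:ℝ)/2) from by rw [Real.rpow_one],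
      ← Real.rpow_add hL0]
    norm_num
  rw [div_sub_div_same, div_eq_mul_inv _ (L ^ (-(3:ℝ)/2)), hLinv,
    show 2 * lam * Real.pi = 2 * L from by rw [hL]; ring]
  linear_combination ((a1 ^ (-(3:ℝ)/2) - a2 ^ (-(3:ℝ)/2)) / β) * hfact -
    (2 * (a1 ^ (-(3:ℝ)/2) - a2 ^ (-(3:ℝ)/2)) / (3 * β)) * hL52
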